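/- Suppose A ∈ ℝ^{n×d} has full column rank with Lewis weights w_1, …, w_n and W = diag(w_1, …, w_n). Then for every vector u in the column space of A and p ≥ 1, ‖W^{1/2 - 1/p} u‖_2 ≤ d^{1/2 - 1/max(2,p)} ‖u‖_p. -/

import Mathlib

open Matrix

/-- Cauchy–Schwarz for a symmetric positive-semidefinite bilinear form given by a matrix. -/
lemma lw_cs_psd {d : ℕ} (M : Matrix (Fin d) (Fin d) ℝ)
    (hpsd : ∀ z, 0 ≤ z ⬝ᵥ (M *ᵥ z))
    (hsym : ∀ y z : Fin d → ℝ, y ⬝ᵥ (M *ᵥ z) = z ⬝ᵥ (M *ᵥ y))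
    (x y : Fin d → ℝ) :
    (y ⬝ᵥ (M *ᵥ x)) ^ 2 ≤ (y ⬝ᵥ (M *ᵥ y)) * (x ⬝ᵥ (M *ᵥ x)) := by
  have key : discrim (x ⬝ᵥ (M *ᵥ x)) (2 * (y ⬝ᵥ (M *ᵥ x))) (y ⬝ᵥ (M *ᵥ y)) ≤ 0 := by
    apply discrim_le_zero
    intro t
    have h := hpsd (t • x + y)
    have hexp : (t • x + y) ⬝ᵥ (M *ᵥ (t • x + y)) =
        (x ⬝ᵥ (M *ᵥ x)) * t ^ 2 + (2 * (y ⬝ᵥ (M *ᵥ x))) * t + (y ⬝ᵥ (M *ᵥ y)) := by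
      simp only [Matrix.mulVec_add, Matrix.mulVec_smul, dotProduct_add, add_dotProduct,
        dotProduct_smul, smul_dotProduct, smul_eq_mul]
      rw [hsym x y]
      ring
    rw [hexp] at h
    linarith
  rw [discrim] at key
  nlinarith [key]

/-- diagonal entry of `A * N * Aᵀ`. -/
lemma lw_quad_diag {n d : ℕ} (A : Matrix (Fin n) (Fin d) ℝ) (N : Matrix (Fin d) (Fin d) ℝ)
    (i : Fin n) : (A * N * Aᵀ) i i = A i ⬝ᵥ (N *ᵥ A i) := by
  simp only [Matrix.mul_apply, Matrix.mulVec, dotProduct, Matrix.transpose_apply,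
    Finset.sum_mul, Finset.mul_sum]
  rw [Finset.sum_comm]
  apply Finset.sum_congr rfl
  intro j _
  apply Finset.sum_congr rfl
  intro k _
  ring

/-- Property (c) of Lewis weights: if `A` has full column rank with `ℓ_p`-Lewis weights
`w_1,…,w_n` and `W = diag(w)`, then for every `u` in the column space of `A`,
`‖W^{1/2-1/p} u‖_2 ≤ d^{1/2 - 1/max(2,p)} ‖u‖_p`. -/
theorem lewis_weight_weighted_l2_bound (n d : ℕ) (p : ℝ) (hp : 1 ≤ p)
    (A : Matrix (Fin n) (Fin d) ℝ) (hrank : A.rank = d)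
    (w : Fin n → ℝ) (hw : ∀ i, 0 < w i)
    (hfix : ∀ i, w i =
      (A i ⬝ᵥ ((Aᵀ * Matrix.diagonal (fun k => w k ^ (1 - 2 / p)) * A)⁻¹ *ᵥ A i)) ^ (p / 2))
    (u : Fin n → ℝ) (hu : ∃ x : Fin d → ℝ, u = A *ᵥ x) :
    (∑ i, (w i ^ ((1 : ℝ) / 2 - 1 / p) * u i) ^ 2) ^ ((1 : ℝ) / 2) ≤
      (d : ℝ) ^ ((1 : ℝ) / 2 - 1 / max 2 p) * (∑ i, |u i| ^ p) ^ (1 / p) := by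
  obtain ⟨x, hux⟩ := hu
  have hp0 : (0 : ℝ) < p := lt_of_lt_of_le one_pos hp
  set c : Fin n → ℝ := fun k => w k ^ (1 - 2 / p) with hc
  have hcpos : ∀ k, 0 < c k := fun k => Real.rpow_pos_of_pos (hw k) _
  set M : Matrix (Fin d) (Fin d) ℝ := Aᵀ * Matrix.diagonal c * A with hM
  -- injectivity of A
  have hinj : ∀ y : Fin d → ℝ, A *ᵥ y = 0 → y = 0 := by
    have h1 := A.mulVecLin.finrank_range_add_finrank_ker
    have h2 : Module.finrank ℝ (LinearMap.range A.mulVecLin) = d := hrank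
    rw [h2, Module.finrank_fin_fun] at h1
    have hker : LinearMap.ker A.mulVecLin = ⊥ :=
      Submodule.finrank_eq_zero.mp (by omega)
    intro y hy
    have : A.mulVecLin y = 0 := by simpa [Matrix.mulVecLin_apply] using hy
    exact (LinearMap.ker_eq_bot.mp hker) (by simpa using this)
  -- quadratic form identity
  have hAD : ∀ y z : Fin d → ℝ, y ⬝ᵥ (M *ᵥ z) = ∑ k, c k * ((A *ᵥ y) k * (A *ᵥ z) k) := by
    intro y z
    rw [hM, Matrix.mul_assoc, ← Matrix.mulVec_mulVec, Matrix.dotProduct_mulVec,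
      Matrix.vecMul_transpose, ← Matrix.mulVec_mulVec]
    simp only [dotProduct, Matrix.mulVec_diagonal]
    exact Finset.sum_congr rfl fun k _ => by ring
  have hMsym : ∀ y z : Fin d → ℝ, y ⬝ᵥ (M *ᵥ z) = z ⬝ᵥ (M *ᵥ y) := by
    intro y z
    rw [hAD, hAD]
    exact Finset.sum_congr rfl fun k _ => by ring
  have hMpsd : ∀ z, 0 ≤ z ⬝ᵥ (M *ᵥ z) := by
    intro z
    rw [hAD]
    exact Finset.sum_nonneg fun k _ => mul_nonneg (hcpos k).le (mul_self_nonneg _)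
  -- positive definiteness of M
  have hMpd : M.PosDef := by
    refine Matrix.PosDef.of_dotProduct_mulVec_pos ?_ ?_
    · show Mᴴ = M
      rw [conjTranspose_eq_transpose_of_trivial, hM, Matrix.transpose_mul, Matrix.transpose_mul,
        Matrix.transpose_transpose, Matrix.diagonal_transpose, Matrix.mul_assoc]
    · intro z hz
      have hAz : A *ᵥ z ≠ 0 := fun h => hz (hinj z h)
      obtain ⟨k, hk⟩ := Function.ne_iff.mp hAz
      have : 0 < z ⬝ᵥ (M *ᵥ z) := by
        rw [hAD]
        refine Finset.sum_pos' (fun j _ => mul_nonneg (hcpos j).le (mul_self_nonneg _))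
          ⟨k, Finset.mem_univ k, ?_⟩
        exact mul_pos (hcpos k) (mul_self_pos.mpr hk)
      simpa [star_trivial] using this
  -- invertibility
  have hdetu : IsUnit M.det := isUnit_iff_ne_zero.mpr hMpd.det_pos.ne'
  have hMMinv : M * M⁻¹ = 1 := Matrix.mul_nonsing_inv M hdetu
  have hMinvM : M⁻¹ * M = 1 := Matrix.nonsing_inv_mul M hdetu
  have hNpsd : (M⁻¹).PosSemidef := hMpd.inv.posSemidef
  -- the leverage quantities t i
  set t : Fin n → ℝ := fun i => A i ⬝ᵥ (M⁻¹ *ᵥ A i) with htdef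
  have ht0 : ∀ i, 0 ≤ t i := by
    intro i
    have := hNpsd.dotProduct_mulVec_nonneg (A i)
    simpa [star_trivial] using this
  have ht : ∀ i, t i = w i ^ (2 / p) := by
    intro i
    have hfi : w i = t i ^ (p / 2) := hfix i
    rw [hfi, ← Real.rpow_mul (ht0 i)]
    rw [show p / 2 * (2 / p) = 1 by field_simp, Real.rpow_one]
  -- sum of weights equals d
  have hsumw : ∑ i, w i = (d : ℝ) := by
    have h1 : ∀ i, w i = c i * t i := by
      intro i
      rw [ht i, hc]
      rw [← Real.rpow_add (hw i)]
      rw [show 1 - 2 / p + 2 / p = 1 by ring, Real.rpow_one]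
    calc ∑ i, w i = ∑ i, (A * M⁻¹ * Aᵀ) i i * c i := by
          refine Finset.sum_congr rfl fun i _ => ?_
          rw [h1 i, lw_quad_diag, mul_comm]
      _ = Matrix.trace (A * M⁻¹ * Aᵀ * Matrix.diagonal c) := by
          rw [Matrix.trace]
          exact Finset.sum_congr rfl fun i _ => (Matrix.mul_diagonal _ _ _ _).symm
      _ = Matrix.trace (M⁻¹ * M) := by
          rw [show A * M⁻¹ * Aᵀ * Matrix.diagonal c = A * (M⁻¹ * (Aᵀ * Matrix.diagonal c)) by
            simp only [Matrix.mul_assoc]]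
          rw [Matrix.trace_mul_comm, hM]
          simp only [Matrix.mul_assoc]
      _ = (d : ℝ) := by rw [hMinvM, Matrix.trace_one]; simp
  -- the weighted square sum equals the quadratic form
  set S : ℝ := x ⬝ᵥ (M *ᵥ x) with hSdef
  have hS0 : 0 ≤ S := hMpsd x
  set T : ℝ := ∑ i, |u i| ^ p with hTdef
  have hT0 : 0 ≤ T := Finset.sum_nonneg fun i _ => Real.rpow_nonneg (abs_nonneg _) _
  have hSx : ∑ i, c i * u i ^ 2 = S := by
    rw [hSdef, hAD x x]
    refine Finset.sum_congr rfl fun i _ => ?_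
    rw [hux]
    ring
  -- Cauchy–Schwarz bound on coordinates
  have hCS : ∀ i, u i ^ 2 ≤ w i ^ (2 / p) * S := by
    intro i
    have h := lw_cs_psd M hMpsd hMsym x (M⁻¹ *ᵥ A i)
    have h1 : (M⁻¹ *ᵥ A i) ⬝ᵥ (M *ᵥ x) = u i := by
      rw [hMsym, Matrix.mulVec_mulVec, hMMinv, Matrix.one_mulVec, hux]
      exact dotProduct_comm _ _
    have h2 : (M⁻¹ *ᵥ A i) ⬝ᵥ (M *ᵥ (M⁻¹ *ᵥ A i)) = t i := by
      rw [Matrix.mulVec_mulVec, hMMinv, Matrix.one_mulVec, htdef]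
      exact dotProduct_comm _ _
    rw [h1, h2] at h
    calc u i ^ 2 ≤ t i * S := h
      _ = w i ^ (2 / p) * S := by rw [ht i]
  -- rewrite the left-hand side
  have hLHS : ∑ i, (w i ^ ((1 : ℝ) / 2 - 1 / p) * u i) ^ 2 = S := by
    rw [← hSx]
    refine Finset.sum_congr rfl fun i _ => ?_
    rw [mul_pow, hc]
    congr 1
    rw [← Real.rpow_natCast (w i ^ ((1 : ℝ) / 2 - 1 / p)) 2, ← Real.rpow_mul (hw i).le]
    norm_num
    ring_nf
  rw [hLHS]
  rcases le_total p 2 with h2 | h2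
  · -- case p ≤ 2
    rw [max_eq_left h2, show (1 : ℝ) / 2 - 1 / 2 = 0 by norm_num, Real.rpow_zero, one_mul]
    -- key inequality : S ≤ S ^ ((2-p)/2) * T
    have key : S ≤ S ^ ((2 - p) / 2) * T := by
      have hterm : ∀ i, c i * u i ^ 2 ≤ S ^ ((2 - p) / 2) * |u i| ^ p := by
        intro i
        have habs2 : u i ^ 2 = |u i| ^ p * |u i| ^ (2 - p) := by
          rw [← sq_abs, ← Real.rpow_natCast |u i| 2,
            show ((2 : ℕ) : ℝ) = p + (2 - p) by push_cast; ring,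
            Real.rpow_add' (abs_nonneg _) (by norm_num)]
        have hub : |u i| ^ (2 - p) ≤ w i ^ ((2 - p) / p) * S ^ ((2 - p) / 2) := by
          have h1 : (|u i| ^ (2 : ℝ)) ^ ((2 - p) / 2) ≤ (w i ^ (2 / p) * S) ^ ((2 - p) / 2) := by
            apply Real.rpow_le_rpow (Real.rpow_nonneg (abs_nonneg _) _) _
              (by linarith : (0 : ℝ) ≤ (2 - p) / 2)
            rw [show (2 : ℝ) = ((2 : ℕ) : ℝ) by norm_num, Real.rpow_natCast, sq_abs]
            exact hCS i
          rw [← Real.rpow_mul (abs_nonneg _),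
            show (2 : ℝ) * ((2 - p) / 2) = 2 - p by ring] at h1
          rw [Real.mul_rpow (Real.rpow_nonneg (hw i).le _) hS0,
            ← Real.rpow_mul (hw i).le, show 2 / p * ((2 - p) / 2) = (2 - p) / p by ring] at h1
          exact h1
        calc c i * u i ^ 2 = |u i| ^ p * (c i * |u i| ^ (2 - p)) := by rw [habs2]; ring
          _ ≤ |u i| ^ p * (c i * (w i ^ ((2 - p) / p) * S ^ ((2 - p) / 2))) := by
              apply mul_le_mul_of_nonneg_left _ (Real.rpow_nonneg (abs_nonneg _) _)
              exact mul_le_mul_of_nonneg_left hub (hcpos i).le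
          _ = S ^ ((2 - p) / 2) * |u i| ^ p := by
              rw [hc]
              have : w i ^ (1 - 2 / p) * w i ^ ((2 - p) / p) = 1 := by
                rw [← Real.rpow_add (hw i),
                  show 1 - 2 / p + (2 - p) / p = 0 by field_simp; ring, Real.rpow_zero]
              calc |u i| ^ p * (w i ^ (1 - 2 / p) * (w i ^ ((2 - p) / p) * S ^ ((2 - p) / 2)))
                  = |u i| ^ p * ((w i ^ (1 - 2 / p) * w i ^ ((2 - p) / p)) * S ^ ((2 - p) / 2)) :=
                    by ring
                _ = S ^ ((2 - p) / 2) * |u i| ^ p := by rw [this]; ring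
      calc S = ∑ i, c i * u i ^ 2 := hSx.symm
        _ ≤ ∑ i, S ^ ((2 - p) / 2) * |u i| ^ p := Finset.sum_le_sum fun i _ => hterm i
        _ = S ^ ((2 - p) / 2) * T := by rw [← Finset.mul_sum, hTdef]
    rcases eq_or_lt_of_le hS0 with hS | hS
    · rw [← hS, Real.zero_rpow (by norm_num : (1 : ℝ) / 2 ≠ 0)]
      exact Real.rpow_nonneg hT0 _
    · have hSp : S ^ (p / 2) ≤ T := by
        have h3 : S * S ^ ((p - 2) / 2) ≤ S ^ ((2 - p) / 2) * T * S ^ ((p - 2) / 2) :=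
          mul_le_mul_of_nonneg_right key (Real.rpow_nonneg hS0 _)
        have hL : S * S ^ ((p - 2) / 2) = S ^ (p / 2) := by
          nth_rewrite 1 [← Real.rpow_one S]
          rw [← Real.rpow_add hS, show 1 + (p - 2) / 2 = p / 2 by ring]
        have hR : S ^ ((2 - p) / 2) * T * S ^ ((p - 2) / 2) = T := by
          rw [mul_comm (S ^ ((2 - p) / 2)) T, mul_assoc, ← Real.rpow_add hS,
            show (2 - p) / 2 + (p - 2) / 2 = 0 by ring, Real.rpow_zero, mul_one]
        rw [hL, hR] at h3
        exact h3
      have : S ^ ((1 : ℝ) / 2) = (S ^ (p / 2)) ^ (1 / p) := by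
        rw [← Real.rpow_mul hS0, show p / 2 * (1 / p) = 1 / 2 by field_simp]
      rw [this]
      exact Real.rpow_le_rpow (Real.rpow_nonneg hS0 _) hSp (by positivity)
  · -- case 2 ≤ p
    rw [max_eq_right h2]
    have hq : (1 : ℝ) ≤ p / 2 := by linarith
    have hhold := Real.inner_le_weight_mul_Lp_of_nonneg Finset.univ hq w
      (fun i => w i ^ (-(2 / p)) * u i ^ 2) (fun i => (hw i).le)
      (fun i => mul_nonneg (Real.rpow_nonneg (hw i).le _) (sq_nonneg _))
    have e1 : ∑ i, w i * (w i ^ (-(2 / p)) * u i ^ 2) = S := by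
      rw [← hSx]
      refine Finset.sum_congr rfl fun i _ => ?_
      rw [hc]
      nth_rewrite 1 [← Real.rpow_one (w i)]
      rw [← mul_assoc, ← Real.rpow_add (hw i), show 1 + -(2 / p) = 1 - 2 / p by ring]
    have e2 : ∀ i, w i * (w i ^ (-(2 / p)) * u i ^ 2) ^ (p / 2) = |u i| ^ p := by
      intro i
      rw [Real.mul_rpow (Real.rpow_nonneg (hw i).le _) (sq_nonneg _),
        ← Real.rpow_mul (hw i).le, show -(2 / p) * (p / 2) = -1 by field_simp,
        ← sq_abs (u i), ← Real.rpow_natCast |u i| 2, ← Real.rpow_mul (abs_nonneg _),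
        show ((2 : ℕ) : ℝ) * (p / 2) = p by push_cast; ring]
      nth_rewrite 1 [← Real.rpow_one (w i)]
      rw [← mul_assoc, ← Real.rpow_add (hw i), show 1 + -1 = (0 : ℝ) by ring,
        Real.rpow_zero, one_mul]
    rw [e1, hsumw] at hhold
    have e3 : ∑ i, w i * (w i ^ (-(2 / p)) * u i ^ 2) ^ (p / 2) = T := by
      rw [hTdef]; exact Finset.sum_congr rfl fun i _ => e2 i
    rw [e3] at hhold
    have hinv : (p / 2)⁻¹ = 2 / p := by rw [inv_div]
    rw [hinv] at hhold
    -- hhold : S ≤ d ^ (1 - 2/p) * T ^ (2/p)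
    have hstep := Real.rpow_le_rpow hS0 hhold (by norm_num : (0 : ℝ) ≤ 1 / 2)
    calc S ^ ((1 : ℝ) / 2) ≤ ((d : ℝ) ^ (1 - 2 / p) * T ^ (2 / p)) ^ ((1 : ℝ) / 2) := hstep
      _ = (d : ℝ) ^ ((1 : ℝ) / 2 - 1 / p) * T ^ (1 / p) := by
          rw [Real.mul_rpow (Real.rpow_nonneg (Nat.cast_nonneg d) _) (Real.rpow_nonneg hT0 _),
            ← Real.rpow_mul (Nat.cast_nonneg d), ← Real.rpow_mul hT0,
            show (1 - 2 / p) * (1 / 2) = 1 / 2 - 1 / p by ring,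
            show 2 / p * (1 / 2) = 1 / p by ring]
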